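/- Strict energy decrease away from equilibria: if θ : ℝ → ℝ^N is differentiable with θ'(t) = f(θ(t)) for all t, and at some time t₀ the state is not an equilibrium (f(θ(t₀)) ≠ 0), then the derivative of t ↦ E(θ(t)) at t₀ is strictly negative. -/

import Mathlib

/-- The OIM energy (Lyapunov) function
`E(θ) = -K ∑_{i ≠ j} W i j cos(θ i - θ j) - K_s ∑ i cos(2 θ i)`. -/
noncomputable def oimEnergy (N : ℕ) (W : Fin N → Fin N → ℝ) (K Ks : ℝ)
    (θ : Fin N → ℝ) : ℝ :=
  -K * ∑ i, ∑ j ∈ Finset.univ.filter (fun j => j ≠ i), W i j * Real.cos (θ i - θ j)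
    - Ks * ∑ i, Real.cos (2 * θ i)

/-- The OIM vector field
`f(θ) i = -K ∑_{j ≠ i} W i j sin(θ i - θ j) - K_s sin(2 θ i)`. -/
noncomputable def oimField (N : ℕ) (W : Fin N → Fin N → ℝ) (K Ks : ℝ)
    (θ : Fin N → ℝ) : Fin N → ℝ :=
  fun i => -K * ∑ j ∈ Finset.univ.filter (fun j => j ≠ i), W i j * Real.sin (θ i - θ j)
    - Ks * Real.sin (2 * θ i)

/-- Strict energy decrease away from equilibria: along a differentiable solution
of `θ' = f(θ)`, if `f(θ(t₀)) ≠ 0` then `d/dt E(θ(t))` is strictly negative at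
`t₀`. -/
theorem oim_strict_energy_decrease (N : ℕ) (W : Fin N → Fin N → ℝ)
    (hsymm : ∀ i j, W i j = W j i) (hdiag : ∀ i, W i i = 0)
    (K Ks : ℝ) (θ : ℝ → Fin N → ℝ) (hθ : Differentiable ℝ θ)
    (hode : ∀ t, deriv θ t = oimField N W K Ks (θ t))
    (t₀ : ℝ) (hne : oimField N W K Ks (θ t₀) ≠ 0) :
    deriv (fun t : ℝ => oimEnergy N W K Ks (θ t)) t₀ < 0 := by
  set u : Fin N → ℝ := θ t₀ with hu
  set φ : Fin N → ℝ := oimField N W K Ks (θ t₀) with hφ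
  -- component derivatives
  have hcomp : ∀ i, HasDerivAt (fun s => θ s i) (φ i) t₀ := by
    intro i
    have h1 : HasDerivAt θ (deriv θ t₀) t₀ := (hθ t₀).hasDerivAt
    rw [hode t₀] at h1
    exact hasDerivAt_pi.1 h1 i
  -- derivative of the energy along the trajectory
  have hE : HasDerivAt (fun t => oimEnergy N W K Ks (θ t))
      (-K * ∑ i, ∑ j ∈ Finset.univ.filter (fun j => j ≠ i),
          W i j * (-Real.sin (u i - u j) * (φ i - φ j))
        - Ks * ∑ i, -Real.sin (2 * u i) * (2 * φ i)) t₀ := by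
    unfold oimEnergy
    apply HasDerivAt.sub
    · apply HasDerivAt.const_mul
      apply HasDerivAt.fun_sum
      intro i _
      apply HasDerivAt.fun_sum
      intro j _
      exact (((hcomp i).sub (hcomp j)).cos).const_mul (W i j)
    · apply HasDerivAt.const_mul
      apply HasDerivAt.fun_sum
      intro i _
      exact ((hcomp i).const_mul 2).cos
  -- remove the filter (diagonal terms vanish)
  have hfilt : ∀ (g : Fin N → Fin N → ℝ), (∀ i, g i i = 0) →
      ∀ i : Fin N, ∑ j ∈ Finset.univ.filter (fun j => j ≠ i), g i j = ∑ j, g i j := by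
    intro g hg i
    apply Finset.sum_filter_of_ne
    intro j _ hj
    intro hji
    exact hj (by rw [hji, hg i])
  -- the swap identity
  have hswap : ∑ i, ∑ j, W i j * Real.sin (u i - u j) * φ j
      = -∑ i, ∑ j, W i j * Real.sin (u i - u j) * φ i := by
    rw [Finset.sum_comm, ← Finset.sum_neg_distrib]
    refine Finset.sum_congr rfl fun j _ => ?_
    rw [← Finset.sum_neg_distrib]
    refine Finset.sum_congr rfl fun i _ => ?_
    rw [hsymm i j, ← neg_sub (u j) (u i), Real.sin_neg]
    ring
  -- the derivative value equals -2 ∑ φ i ^ 2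
  have key : (-K * ∑ i, ∑ j ∈ Finset.univ.filter (fun j => j ≠ i),
          W i j * (-Real.sin (u i - u j) * (φ i - φ j))
        - Ks * ∑ i, -Real.sin (2 * u i) * (2 * φ i)) = -2 * ∑ i, φ i ^ 2 := by
    have h1 : ∀ i : Fin N, ∑ j ∈ Finset.univ.filter (fun j => j ≠ i),
        W i j * (-Real.sin (u i - u j) * (φ i - φ j))
        = ∑ j, W i j * (-Real.sin (u i - u j) * (φ i - φ j)) :=
      hfilt (fun i j => W i j * (-Real.sin (u i - u j) * (φ i - φ j)))
        (fun i => by simp [hdiag i]) 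
    have h2 : ∀ i : Fin N, ∑ j ∈ Finset.univ.filter (fun j => j ≠ i),
        W i j * Real.sin (u i - u j) = ∑ j, W i j * Real.sin (u i - u j) :=
      hfilt (fun i j => W i j * Real.sin (u i - u j)) (fun i => by simp [hdiag i])
    simp only [h1]
    -- expand the double sum
    have hexp : ∑ i, ∑ j, W i j * (-Real.sin (u i - u j) * (φ i - φ j))
        = -(∑ i, ∑ j, W i j * Real.sin (u i - u j) * φ i)
          + ∑ i, ∑ j, W i j * Real.sin (u i - u j) * φ j := by
      rw [← Finset.sum_neg_distrib, ← Finset.sum_add_distrib]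
      refine Finset.sum_congr rfl fun i _ => ?_
      rw [← Finset.sum_neg_distrib, ← Finset.sum_add_distrib]
      exact Finset.sum_congr rfl fun j _ => by ring
    rw [hexp, hswap]
    have hS : ∀ i : Fin N, ∑ j, W i j * Real.sin (u i - u j) * φ i
        = (∑ j, W i j * Real.sin (u i - u j)) * φ i := fun i =>
      (Finset.sum_mul _ _ _).symm
    simp only [hS]
    rw [← Finset.sum_neg_distrib, ← Finset.sum_add_distrib, Finset.mul_sum,
      Finset.mul_sum, Finset.mul_sum, ← Finset.sum_sub_distrib]
    refine Finset.sum_congr rfl fun i _ => ?_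
    have hfield : φ i = -K * ∑ j, W i j * Real.sin (u i - u j)
        - Ks * Real.sin (2 * u i) := by
      rw [hφ, oimField, ← h2 i, hu]
    linear_combination (2 * φ i) * hfield
  rw [key] at hE
  rw [hE.deriv]
  -- positivity of ∑ φ i ^ 2
  have hpos : 0 < ∑ i, φ i ^ 2 := by
    obtain ⟨i, hi⟩ : ∃ i, φ i ≠ 0 := by
      by_contra h
      push_neg at h
      exact hne (funext h)
    exact Finset.sum_pos' (fun j _ => sq_nonneg _)
      ⟨i, Finset.mem_univ i, by positivity⟩
  linarith
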